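/- For real constants b₁, b₂, the functions ψ(x,t) = e^{−t}·cos(e^{−t}x)·(e^{−(b₁+1)e^{−t}sinh t} + e^{−(b₂+1)e^{−t}sinh t}) and φ(x,t) = (b₁−b₂)·e^{−t}·cos(e^{−t}x)·e^{−(b₂+1)e^{−t}sinh t} satisfy the variable-coefficient system ψ_t = ψ_{xx} − ψ − b₁e^{−2t}ψ − xψ_x + e^{−2t}φ and φ_t = φ_{xx} − φ − b₂e^{−2t}φ − xφ_x for all (x,t) ∈ ℝ². -/

import Mathlib

private lemma dcos (a c K x : ℝ) :
    deriv (fun z => a * Real.cos (c * z) * K) x = a * (-Real.sin (c * x) * c) * K := by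
  have h := ((((hasDerivAt_id x).const_mul c).cos).const_mul a).mul_const K
  have h2 : deriv (fun z => a * Real.cos (c * z) * K) x
      = a * (-Real.sin (c * x) * (c * 1)) * K := h.deriv
  rw [h2]; ring

private lemma dsin (a c K x : ℝ) :
    deriv (fun z => a * (-Real.sin (c * z) * c) * K) x
      = a * (-(Real.cos (c * x) * c) * c) * K := by
  have h := (((((hasDerivAt_id x).const_mul c).sin.neg).mul_const c).const_mul a).mul_const K
  have h2 : deriv (fun z => a * (-Real.sin (c * z) * c) * K) x
      = a * (-(Real.cos (c * x) * (c * 1)) * c) * K := h.deriv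
  rw [h2]; ring

private lemma hE (t : ℝ) : HasDerivAt (fun t : ℝ => Real.exp (-t)) (Real.exp (-t) * (-1)) t :=
  ((hasDerivAt_id t).neg).exp

private lemma hA (b t : ℝ) : HasDerivAt (fun t => Real.exp (-(b + 1) * Real.exp (-t) * Real.sinh t))
    (Real.exp (-(b + 1) * Real.exp (-t) * Real.sinh t) *
      (-(b + 1) * (Real.exp (-t) * (-1)) * Real.sinh t + -(b + 1) * Real.exp (-t) * Real.cosh t)) t :=
  (((hE t).const_mul (-(b + 1))).mul (Real.hasDerivAt_sinh t)).exp

private lemma dtψ (b₁ b₂ x t : ℝ) :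
    deriv (fun t => Real.exp (-t) * Real.cos (Real.exp (-t) * x) *
      (Real.exp (-(b₁ + 1) * Real.exp (-t) * Real.sinh t) +
       Real.exp (-(b₂ + 1) * Real.exp (-t) * Real.sinh t))) t
    = (Real.exp (-t) * (-1)) * Real.cos (Real.exp (-t) * x) *
      (Real.exp (-(b₁ + 1) * Real.exp (-t) * Real.sinh t) +
       Real.exp (-(b₂ + 1) * Real.exp (-t) * Real.sinh t))
    + Real.exp (-t) * (-Real.sin (Real.exp (-t) * x) * (Real.exp (-t) * (-1) * x)) *
      (Real.exp (-(b₁ + 1) * Real.exp (-t) * Real.sinh t) +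
       Real.exp (-(b₂ + 1) * Real.exp (-t) * Real.sinh t))
    + Real.exp (-t) * Real.cos (Real.exp (-t) * x) *
      (Real.exp (-(b₁ + 1) * Real.exp (-t) * Real.sinh t) *
        (-(b₁ + 1) * (Real.exp (-t) * (-1)) * Real.sinh t + -(b₁ + 1) * Real.exp (-t) * Real.cosh t)
      + Real.exp (-(b₂ + 1) * Real.exp (-t) * Real.sinh t) *
        (-(b₂ + 1) * (Real.exp (-t) * (-1)) * Real.sinh t + -(b₂ + 1) * Real.exp (-t) * Real.cosh t)) := by
  have h := ((hE t).mul ((hE t).mul_const x).cos).mul ((hA b₁ t).add (hA b₂ t))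
  have h2 := h.deriv
  erw [h2]; simp only [Pi.mul_apply, Pi.add_apply]; ring

private lemma dtφ (b₁ b₂ x t : ℝ) :
    deriv (fun t => (b₁ - b₂) * Real.exp (-t) * Real.cos (Real.exp (-t) * x) *
      Real.exp (-(b₂ + 1) * Real.exp (-t) * Real.sinh t)) t
    = ((b₁ - b₂) * (Real.exp (-t) * (-1)) * Real.cos (Real.exp (-t) * x)
      + (b₁ - b₂) * Real.exp (-t) *
        (-Real.sin (Real.exp (-t) * x) * (Real.exp (-t) * (-1) * x))) *
      Real.exp (-(b₂ + 1) * Real.exp (-t) * Real.sinh t)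
    + (b₁ - b₂) * Real.exp (-t) * Real.cos (Real.exp (-t) * x) *
      (Real.exp (-(b₂ + 1) * Real.exp (-t) * Real.sinh t) *
        (-(b₂ + 1) * (Real.exp (-t) * (-1)) * Real.sinh t + -(b₂ + 1) * Real.exp (-t) * Real.cosh t)) := by
  have h := ((((hE t).const_mul (b₁ - b₂)).mul ((hE t).mul_const x).cos)).mul (hA b₂ t)
  have h2 := h.deriv
  erw [h2]; simp only [Pi.mul_apply]

theorem stmt2 (b₁ b₂ : ℝ)
    (ψ φ : ℝ → ℝ → ℝ)
    (hψ : ψ = fun x t => Real.exp (-t) * Real.cos (Real.exp (-t) * x) *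
      (Real.exp (-(b₁ + 1) * Real.exp (-t) * Real.sinh t) +
       Real.exp (-(b₂ + 1) * Real.exp (-t) * Real.sinh t)))
    (hφ : φ = fun x t => (b₁ - b₂) * Real.exp (-t) * Real.cos (Real.exp (-t) * x) *
      Real.exp (-(b₂ + 1) * Real.exp (-t) * Real.sinh t)) :
    (∀ x t : ℝ, deriv (ψ x) t =
      deriv (fun y => deriv (fun z => ψ z t) y) x - ψ x t - b₁ * Real.exp (-2 * t) * ψ x t
        - x * deriv (fun y => ψ y t) x + Real.exp (-2 * t) * φ x t) ∧
    (∀ x t : ℝ, deriv (φ x) t =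
      deriv (fun y => deriv (fun z => φ z t) y) x - φ x t - b₂ * Real.exp (-2 * t) * φ x t
        - x * deriv (fun y => φ y t) x) := by
  subst hψ hφ
  constructor
  · intro x t
    have hx2 : (fun y => deriv (fun z => Real.exp (-t) * Real.cos (Real.exp (-t) * z) *
        (Real.exp (-(b₁ + 1) * Real.exp (-t) * Real.sinh t) +
         Real.exp (-(b₂ + 1) * Real.exp (-t) * Real.sinh t))) y)
        = fun y => Real.exp (-t) * (-Real.sin (Real.exp (-t) * y) * Real.exp (-t)) *
        (Real.exp (-(b₁ + 1) * Real.exp (-t) * Real.sinh t) +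
         Real.exp (-(b₂ + 1) * Real.exp (-t) * Real.sinh t)) := funext fun y => dcos _ _ _ y
    rw [dtψ b₁ b₂ x t, hx2, dsin, dcos]
    have e2 : Real.exp (-2 * t) = Real.exp (-t) * Real.exp (-t) := by
      rw [← Real.exp_add]; congr 1; ring
    have hc : Real.cosh t = Real.sinh t + Real.exp (-t) := by
      rw [← Real.cosh_sub_sinh t]; ring
    set A := Real.exp (-(b₁ + 1) * Real.exp (-t) * Real.sinh t) with hA'
    set B := Real.exp (-(b₂ + 1) * Real.exp (-t) * Real.sinh t) with hB'
    set C := Real.cos (Real.exp (-t) * x) with hC'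
    set S := Real.sin (Real.exp (-t) * x) with hS'
    rw [e2, hc]
    ring
  · intro x t
    have hx1 : (fun y => (b₁ - b₂) * Real.exp (-t) * Real.cos (Real.exp (-t) * y) *
        Real.exp (-(b₂ + 1) * Real.exp (-t) * Real.sinh t))
        = fun y => ((b₁ - b₂) * Real.exp (-t)) * Real.cos (Real.exp (-t) * y) *
        Real.exp (-(b₂ + 1) * Real.exp (-t) * Real.sinh t) := by
      funext y; ring_nf
    have hx2 : (fun y => deriv (fun z => (b₁ - b₂) * Real.exp (-t) * Real.cos (Real.exp (-t) * z) *
        Real.exp (-(b₂ + 1) * Real.exp (-t) * Real.sinh t)) y)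
        = fun y => ((b₁ - b₂) * Real.exp (-t)) * (-Real.sin (Real.exp (-t) * y) * Real.exp (-t)) *
        Real.exp (-(b₂ + 1) * Real.exp (-t) * Real.sinh t) := by
      funext y; rw [hx1]; exact dcos _ _ _ y
    rw [dtφ b₁ b₂ x t, hx2, dsin, hx1, dcos]
    have e2 : Real.exp (-2 * t) = Real.exp (-t) * Real.exp (-t) := by
      rw [← Real.exp_add]; congr 1; ring
    have hc : Real.cosh t = Real.sinh t + Real.exp (-t) := by
      rw [← Real.cosh_sub_sinh t]; ring
    set B := Real.exp (-(b₂ + 1) * Real.exp (-t) * Real.sinh t) with hB'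
    set C := Real.cos (Real.exp (-t) * x) with hC'
    set S := Real.sin (Real.exp (-t) * x) with hS'
    rw [e2, hc]
    ring
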